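/- Let A be an associative unital ring, M an A-bimodule, and B an antisymmetric biderivation of A with values in M. Let e, f ∈ A be idempotents which are either equal or orthogonal. Then for all x ∈ A one has B(e, exf) = B(exf, f). -/

import Mathlib

open MulOpposite

/-- Let `B` be an antisymmetric biderivation of a unital ring `A` with values in
an `A`-bimodule `M`, and let `e, f` be idempotents of `A` which are either equal or orthogonal.
Then `B e (e*x*f) = B (e*x*f) f` for all `x ∈ A`. -/
theorem antisymm_bider_exf
    {A M : Type*} [Ring A] [AddCommGroup M] [Module A M] [Module Aᵐᵒᵖ M]
    [SMulCommClass A Aᵐᵒᵖ M]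
    (B : A → A → M)
    (hadd_left : ∀ x y z : A, B (x + y) z = B x z + B y z)
    (hadd_right : ∀ x y z : A, B x (y + z) = B x y + B x z)
    (hder_left : ∀ x y z : A, B (x * y) z = op y • B x z + x • B y z)
    (hder_right : ∀ x y z : A, B x (y * z) = op z • B x y + y • B x z)
    (hanti : ∀ x : A, B x x = 0)
    (e f : A) (he : e * e = e) (hf : f * f = f)
    (hef : e = f ∨ (e * f = 0 ∧ f * e = 0)) :
    ∀ x : A, B e (e * x * f) = B (e * x * f) f := by
  -- B of zero
  have hB0l : ∀ a : A, B 0 a = 0 := by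
    intro a
    have h := hadd_left 0 0 a
    rw [add_zero] at h
    exact left_eq_add.mp h
  have hB0r : ∀ a : A, B a 0 = 0 := by
    intro a
    have h := hadd_right a 0 0
    rw [add_zero] at h
    exact left_eq_add.mp h
  -- antisymmetry
  have anti : ∀ a b : A, B a b = - B b a := by
    intro a b
    have h := hanti (a + b)
    rw [hadd_left, hadd_right, hadd_right, hanti, hanti] at h
    simp only [zero_add, add_zero] at h
    exact eq_neg_of_add_eq_zero_left h
  intro x
  rcases hef with rfl | ⟨h1, h2⟩
  · -- case e = f
    -- key : e • op e • B e x = 0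
    have hrel := hder_left e e x
    rw [he] at hrel
    have h2 : e • B e x = e • op e • B e x + e • B e x := by
      conv_lhs => rw [hrel]
      rw [smul_add, ← mul_smul, he]
    have key : e • op e • B e x = 0 := right_eq_add.mp h2
    have key' : e • op e • B x e = 0 := by
      rw [anti x e, smul_neg, smul_neg, key, neg_zero]
    have L : B e (e * x * e) = e • op e • B e x := by
      rw [mul_assoc, hder_right, hder_right, hanti]
      simp only [smul_zero, zero_add, add_zero]
    have R : B (e * x * e) e = op e • (e • B x e) := by
      rw [hder_left, hder_left, hanti]
      simp only [smul_zero, zero_add, add_zero]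
    rw [L, R, key, ← smul_comm e (op e) (B x e), key']
  · -- orthogonal case
    have hBef : B e f = 0 := by
      have a1 : e • B e f = 0 := by
        have h := hder_right e e f
        rw [h1, hB0r, hanti, smul_zero, zero_add] at h
        exact h.symm
      have a2 : op e • B e f = 0 := by
        have h := hder_right e f e
        rw [h2, hB0r, hanti, smul_zero, add_zero] at h
        exact h.symm
      have a3 := hder_left e e f
      rw [he, a1, a2, add_zero] at a3
      exact a3
    have hkey : op f • B e x = e • B x f := by
      have h := hder_left e f x
      rw [h1, hB0l, anti f x, smul_neg] at h
      have := (add_eq_zero_iff_eq_neg.mp h.symm)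
      rw [this, neg_neg]
    have L : B e (e * x * f) = e • op f • B e x := by
      rw [mul_assoc, hder_right, hder_right, hanti, hBef]
      simp only [smul_zero, zero_add, add_zero]
    have R : B (e * x * f) f = op f • (e • B x f) := by
      rw [hder_left, hder_left, hanti, hBef]
      simp only [smul_zero, zero_add, add_zero]
    rw [L, R, hkey, ← mul_smul, he, ← hkey, ← mul_smul, ← op_mul, hf]
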